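/- Let P be a finite nonempty type, E = EuclideanSpace ℝ (Fin n), f : P → E → E a family of continuously differentiable vector fields whose initial value problems have unique solutions, and let τd > 0 be a dwell time. Then for all ω ν : E, the following are equivalent: (i) there exist m ≥ 1, modes q 1, …, q m : P, and durations s 1, …, s m with s i ≥ τd for all 1 ≤ i < m and s m ≥ 0, together with a continuous φ : ℝ → E with φ 0 = ω and φ (s 1 + ⋯ + s m) = ν that, on each consecutive time interval of length s i, solves the ODE x' = f (q i) x (i.e., ν is reachable from ω by a finite concatenation of flows in which every segment except possibly the last lasts at least τd); (ii) there exist a switching signal (τ, σ) whose switching times satisfy τ (i+1) − τ i ≥ τd for all i, a time T ≥ 0, and a solution φ of the switched system from ω following (τ, σ) up to time T with φ T = ν. -/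

import Mathlib

open Set Filter

/-- `(τ, σ)` is a switching signal. -/
def IsSwitchingSignal (P : Type*) (τ : ℕ → ℝ) (σ : ℕ → P) : Prop :=
  StrictMono τ ∧ τ 0 = 0 ∧ Filter.Tendsto τ Filter.atTop Filter.atTop

/-- `φ` is a solution of the switched system `f` from `ω` following `(τ, σ)` up to time `T`. -/
def IsSwitchedSolution {n : ℕ} {P : Type*}
    (f : P → EuclideanSpace ℝ (Fin n) → EuclideanSpace ℝ (Fin n))
    (τ : ℕ → ℝ) (σ : ℕ → P) (ω : EuclideanSpace ℝ (Fin n)) (T : ℝ)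
    (φ : ℝ → EuclideanSpace ℝ (Fin n)) : Prop :=
  Continuous φ ∧ φ 0 = ω ∧
    ∀ i : ℕ, 1 ≤ i → ∀ s ∈ Set.Icc (τ (i - 1)) (τ i) ∩ Set.Icc (0 : ℝ) T,
      HasDerivWithinAt φ (f (σ i) (φ s)) (Set.Icc (τ (i - 1)) (τ i)) s

private lemma tendsto_of_dwell {τ : ℕ → ℝ} {τd : ℝ} (hτd : 0 < τd)
    (h : ∀ i, τd ≤ τ (i + 1) - τ i) : Tendsto τ atTop atTop := by
  have key : ∀ n : ℕ, τ 0 + n * τd ≤ τ n := by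
    intro n
    induction n with
    | zero => simp
    | succ k ih =>
      have := h k
      push_cast
      nlinarith
  apply tendsto_atTop_mono key
  apply tendsto_atTop_add_const_left
  exact Tendsto.atTop_mul_const hτd tendsto_natCast_atTop_atTop

private lemma forward_aux {n : ℕ} {P : Type*}
    (f : P → EuclideanSpace ℝ (Fin n) → EuclideanSpace ℝ (Fin n))
    {τd : ℝ} (hτd : 0 < τd) {m : ℕ} (hm : 1 ≤ m) (q : ℕ → P) (t : ℕ → ℝ)
    (ht0 : t 0 = 0)
    (hstep : ∀ i, 1 ≤ i → i < m → τd ≤ t i - t (i - 1))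
    (hlast : t (m - 1) ≤ t m)
    {ω ν : EuclideanSpace ℝ (Fin n)}
    (φ : ℝ → EuclideanSpace ℝ (Fin n)) (hφc : Continuous φ) (hφ0 : φ 0 = ω)
    (hφend : φ (t m) = ν)
    (hode : ∀ i, 1 ≤ i → i ≤ m → ∀ r ∈ Set.Icc (t (i - 1)) (t i),
      HasDerivWithinAt φ (f (q i) (φ r)) (Set.Icc (t (i - 1)) (t i)) r) :
    ∃ (τ : ℕ → ℝ) (σ : ℕ → P), IsSwitchingSignal P τ σ ∧
      (∀ i : ℕ, τd ≤ τ (i + 1) - τ i) ∧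
      ∃ T : ℝ, 0 ≤ T ∧ ∃ ψ : ℝ → EuclideanSpace ℝ (Fin n),
        IsSwitchedSolution f τ σ ω T ψ ∧ ψ T = ν := by
  have hstep' : ∀ j, j + 1 ≤ m → t j ≤ t (j + 1) := by
    intro j hj
    rcases lt_or_eq_of_le hj with hj' | hj'
    · have := hstep (j + 1) (Nat.le_add_left 1 j) hj'
      simp only [Nat.add_sub_cancel] at this
      linarith
    · have hje : j = m - 1 := by omega
      rw [hje, show m - 1 + 1 = m by omega]
      exact hlast
  have hmono_t : ∀ j, j ≤ m → ∀ i, i ≤ j → t i ≤ t j := by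
    intro j
    induction j with
    | zero => intro _ i hi; interval_cases i; exact le_rfl
    | succ p ih =>
      intro hj i hi
      rcases Nat.lt_or_ge i (p + 1) with h | h
      · exact le_trans (ih (by omega) i (by omega)) (hstep' p (by omega))
      · rw [show i = p + 1 by omega]
  set T : ℝ := t m with hTdef
  set a : ℝ := t (m - 1) with hadef
  have haT : a ≤ T := hlast
  have hT0 : 0 ≤ T := by
    rw [hTdef, ← ht0]
    exact hmono_t m le_rfl 0 (Nat.zero_le m)
  set c : EuclideanSpace ℝ (Fin n) := f (q m) (φ T) with hcdef
  set ψ : ℝ → EuclideanSpace ℝ (Fin n) :=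
    fun x => if x ≤ T then φ x else φ T + (x - T) • c with hψdef
  set τ : ℕ → ℝ :=
    fun i => if i < m then t i else a + max (T - a) τd + ((i - m : ℕ) : ℝ) * τd with hτdef
  set σ : ℕ → P := fun i => if i ≤ m then q i else q m with hσdef
  have hτm : τ m = a + max (T - a) τd := by
    simp [hτdef]
  have hTτm : T ≤ τ m := by
    rw [hτm]
    have := le_max_left (T - a) τd
    linarith
  have hgap : ∀ i, τd ≤ τ (i + 1) - τ i := by
    intro i
    by_cases h1 : i + 1 < m
    · have h2 : i < m := by omega
      simp only [hτdef, if_pos h1, if_pos h2]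
      have := hstep (i + 1) (Nat.le_add_left 1 i) h1
      simp only [Nat.add_sub_cancel] at this
      linarith
    · by_cases h2 : i < m
      · have hieq : i = m - 1 := by omega
        subst hieq
        have h3 : m - 1 + 1 - m = 0 := by omega
        simp only [hτdef, if_neg h1, if_pos h2, h3, Nat.cast_zero, zero_mul, add_zero]
        rw [← hadef]
        have := le_max_right (T - a) τd
        linarith
      · have h3 : i + 1 - m = (i - m) + 1 := by omega
        simp only [hτdef, if_neg h1, if_neg h2, h3]
        push_cast
        ring_nf
        linarith
  have hτmono : StrictMono τ := by
    apply strictMono_nat_of_lt_succ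
    intro i
    have := hgap i
    linarith
  have hτ0 : τ 0 = 0 := by
    simp only [hτdef, if_pos (by omega : 0 < m)]
    exact ht0
  have hψeq : ∀ x, x ≤ T → ψ x = φ x := by
    intro x hx
    simp [hψdef, hx]
  have hψc : Continuous ψ := by
    rw [hψdef]
    apply Continuous.if_le hφc
      (continuous_const.add ((continuous_id.sub continuous_const).smul continuous_const))
      continuous_id continuous_const
    intro x hx
    simp only [id] at hx
    subst hx
    simp [hTdef]
  have hψ0 : ψ 0 = ω := by rw [hψeq 0 hT0]; exact hφ0
  have hψT : ψ T = ν := by rw [hψeq T le_rfl]; exact hφend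
  have hψTφ : ψ T = φ T := hψeq T le_rfl
  have hg : HasDerivAt (fun x : ℝ => φ T + (x - T) • c) c T := by
    simpa using (((hasDerivAt_id T).sub_const T).smul_const c).const_add (φ T)
  have hright : ∀ b : ℝ, T ≤ b → HasDerivWithinAt ψ c (Set.Icc T b) T := by
    intro b hb
    apply hg.hasDerivWithinAt.congr
    · intro x hx
      by_cases hxT : x ≤ T
      · have hxe : x = T := le_antisymm hxT hx.1
        subst hxe
        simp [hψdef]
      · simp [hψdef, hxT]
    · simp [hψdef]
  have hleft : ∀ r ∈ Set.Icc a T, HasDerivWithinAt ψ (f (q m) (ψ r)) (Set.Icc a T) r := by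
    intro r hr
    have key := hode m hm le_rfl r hr
    rw [hψeq r hr.2]
    exact key.congr (fun x hx => hψeq x hx.2) (hψeq r hr.2)
  refine ⟨τ, σ, ⟨hτmono, hτ0, tendsto_of_dwell hτd hgap⟩, hgap, T, hT0, ψ, ⟨hψc, hψ0, ?_⟩, hψT⟩
  intro i hi1 r hr
  obtain ⟨⟨hr1, hr2⟩, hr0, hrT⟩ := hr
  by_cases hilt : i < m
  · have hi1m : i - 1 < m := by omega
    have hτi1 : τ (i - 1) = t (i - 1) := by simp [hτdef, hi1m]
    have hτi : τ i = t i := by simp [hτdef, hilt]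
    have hσi : σ i = q i := by simp [hσdef, le_of_lt hilt]
    rw [hτi1] at hr1
    rw [hτi] at hr2
    rw [hτi1, hτi, hσi]
    have hrmem : r ∈ Set.Icc (t (i - 1)) (t i) := ⟨hr1, hr2⟩
    have key := hode i hi1 (le_of_lt hilt) r hrmem
    have heq : ∀ x ∈ Set.Icc (t (i - 1)) (t i), ψ x = φ x := by
      intro x hx
      exact hψeq x (le_trans hx.2 (hmono_t m le_rfl i (le_of_lt hilt)))
    rw [heq r hrmem]
    exact key.congr heq (heq r hrmem)
  · by_cases him : i = m
    · rw [him] at hr1 hr2 ⊢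
      have hτi1 : τ (m - 1) = a := by simp [hτdef, (by omega : m - 1 < m), hadef]
      have hσi : σ m = q m := by simp [hσdef]
      rw [hτi1] at hr1 ⊢
      rw [hσi]
      have hrmem : r ∈ Set.Icc a T := ⟨hr1, hrT⟩
      have key' := hleft r hrmem
      rcases lt_or_eq_of_le hrT with hrlt | hreq
      · apply key'.mono_of_mem_nhdsWithin
        rw [mem_nhdsWithin]
        exact ⟨Set.Iio T, isOpen_Iio, hrlt, fun x hx => ⟨hx.2.1, le_of_lt hx.1⟩⟩
      · subst hreq
        have hval : f (q m) (ψ T) = c := by rw [hψTφ, hcdef]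
        rw [hval]
        rw [hval] at key'
        have hu := key'.union (hright (τ m) hTτm)
        rwa [Set.Icc_union_Icc_eq_Icc haT hTτm] at hu
    · have him' : m < i := by omega
      have h1 : τ m ≤ τ (i - 1) := hτmono.monotone (by omega)
      have h2 : τ (i - 1) = T := le_antisymm (le_trans hr1 hrT) (le_trans hTτm h1)
      have hrT' : r = T := le_antisymm hrT (h2 ▸ hr1)
      have hieq : i = m + 1 := by
        by_contra hc'
        have hlt : m < i - 1 := by omega
        have := hτmono hlt
        rw [h2] at this
        linarith
      subst hieq
      subst hrT'
      simp only [Nat.add_sub_cancel] at h2 ⊢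
      rw [h2]
      have hσi : σ (m + 1) = q m := by simp [hσdef]
      rw [hσi, hψTφ, ← hcdef]
      exact hright (τ (m + 1)) (le_trans hTτm (hτmono.monotone (Nat.le_succ m)))

theorem slow_switching_adequacy {n : ℕ} {P : Type*} [Fintype P] [Nonempty P]
    (f : P → EuclideanSpace ℝ (Fin n) → EuclideanSpace ℝ (Fin n))
    (hf : ∀ p, ContDiff ℝ 1 (f p))
    (huniq : ∀ (p : P) (a b : ℝ) (φ ψ : ℝ → EuclideanSpace ℝ (Fin n)),
      (∀ s ∈ Set.Icc a b, HasDerivWithinAt φ (f p (φ s)) (Set.Icc a b) s) →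
      (∀ s ∈ Set.Icc a b, HasDerivWithinAt ψ (f p (ψ s)) (Set.Icc a b) s) →
      φ a = ψ a → ∀ s ∈ Set.Icc a b, φ s = ψ s)
    (τd : ℝ) (hτd : 0 < τd) (ω ν : EuclideanSpace ℝ (Fin n)) :
    (∃ m : ℕ, 1 ≤ m ∧ ∃ (q : ℕ → P) (s : ℕ → ℝ),
      (∀ i : ℕ, 1 ≤ i → i < m → τd ≤ s i) ∧ 0 ≤ s m ∧
      ∃ φ : ℝ → EuclideanSpace ℝ (Fin n), Continuous φ ∧ φ 0 = ω ∧
        φ (∑ j ∈ Finset.Icc 1 m, s j) = ν ∧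
        ∀ i : ℕ, 1 ≤ i → i ≤ m →
          ∀ r ∈ Set.Icc (∑ j ∈ Finset.Icc 1 (i - 1), s j) (∑ j ∈ Finset.Icc 1 i, s j),
            HasDerivWithinAt φ (f (q i) (φ r))
              (Set.Icc (∑ j ∈ Finset.Icc 1 (i - 1), s j) (∑ j ∈ Finset.Icc 1 i, s j)) r) ↔
    (∃ (τ : ℕ → ℝ) (σ : ℕ → P), IsSwitchingSignal P τ σ ∧
      (∀ i : ℕ, τd ≤ τ (i + 1) - τ i) ∧
      ∃ T : ℝ, 0 ≤ T ∧ ∃ φ : ℝ → EuclideanSpace ℝ (Fin n),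
        IsSwitchedSolution f τ σ ω T φ ∧ φ T = ν) := by
  constructor
  · rintro ⟨m, hm, q, s, hsge, hsm, φ, hφc, hφ0, hφend, hφode⟩
    have hstep0 : ∀ j : ℕ, ∑ x ∈ Finset.Icc 1 (j + 1), s x
        = (∑ x ∈ Finset.Icc 1 j, s x) + s (j + 1) :=
      fun j => Finset.sum_Icc_succ_top (Nat.le_add_left 1 j) s
    have hsum : ∀ i : ℕ, 1 ≤ i → ∑ j ∈ Finset.Icc 1 i, s j
        = (∑ j ∈ Finset.Icc 1 (i - 1), s j) + s i := by
      intro i hi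
      have := hstep0 (i - 1)
      rwa [show i - 1 + 1 = i by omega] at this
    apply forward_aux f hτd hm q (fun i => ∑ j ∈ Finset.Icc 1 i, s j)
    · simp
    · intro i hi1 hilt
      have := hsum i hi1
      have h2 := hsge i hi1 hilt
      linarith
    · have := hsum m hm
      linarith
    · exact hφc
    · exact hφ0
    · exact hφend
    · exact hφode
  · rintro ⟨τ, σ, ⟨hmono, hτ0, htend⟩, hdwell, T, hT, φ, ⟨hc, h0, hode⟩, hφT⟩
    have hex : ∃ i : ℕ, T ≤ τ (i + 1) := by
      obtain ⟨N, hN⟩ := (htend.eventually_ge_atTop T).exists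
      exact ⟨N, le_trans hN (hmono.monotone (Nat.le_succ N))⟩
    set k := Nat.find hex with hkdef
    have hkspec : T ≤ τ (k + 1) := Nat.find_spec hex
    have hk' : τ k ≤ T := by
      rcases Nat.eq_zero_or_pos k with h | h
      · rw [h, hτ0]; exact hT
      · obtain ⟨j, hj⟩ := Nat.exists_eq_succ_of_ne_zero h.ne'
        rw [hj]
        have := Nat.find_min hex (hkdef ▸ hj ▸ Nat.lt_succ_self j)
        linarith [lt_of_not_ge this]
    set s : ℕ → ℝ := fun i => if i < k + 1 then τ i - τ (i - 1)
      else if i = k + 1 then T - τ k else 0 with hsdef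
    have hsval : ∀ i : ℕ, i < k + 1 → s i = τ i - τ (i - 1) := by
      intro i hi; simp only [hsdef, if_pos hi]
    have hsvalm : s (k + 1) = T - τ k := by simp [hsdef]
    have hsum : ∀ i : ℕ, i ≤ k → ∑ j ∈ Finset.Icc 1 i, s j = τ i := by
      intro i hi
      induction i with
      | zero => simp [hτ0]
      | succ j ih =>
        rw [Finset.sum_Icc_succ_top (Nat.le_add_left 1 j), ih (by omega),
          hsval (j + 1) (by omega)]
        simp only [Nat.add_sub_cancel]
        ring
    have hsumT : ∑ j ∈ Finset.Icc 1 (k + 1), s j = T := by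
      rw [Finset.sum_Icc_succ_top (Nat.le_add_left 1 k), hsum k le_rfl, hsvalm]
      ring
    refine ⟨k + 1, by omega, σ, s, ?_, ?_, φ, hc, h0, ?_, ?_⟩
    · intro i hi1 hilt
      rw [hsval i hilt]
      have := hdwell (i - 1)
      rwa [show i - 1 + 1 = i by omega] at this
    · rw [hsvalm]
      linarith
    · rw [hsumT]
      exact hφT
    · intro i hi1 hile r hr
      rcases Nat.lt_or_ge i (k + 1) with hilt | hige
      · rw [hsum (i - 1) (by omega), hsum i (by omega)] at hr ⊢
        refine hode i hi1 r ⟨hr, ?_, ?_⟩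
        · calc (0 : ℝ) = τ 0 := hτ0.symm
            _ ≤ τ (i - 1) := hmono.monotone (Nat.zero_le _)
            _ ≤ r := hr.1
        · calc r ≤ τ i := hr.2
            _ ≤ τ k := hmono.monotone (by omega)
            _ ≤ T := hk'
      · have hieq : i = k + 1 := by omega
        subst hieq
        rw [show k + 1 - 1 = k by omega, hsum k le_rfl, hsumT] at hr ⊢
        have hr0 : (0 : ℝ) ≤ r := by
          calc (0 : ℝ) = τ 0 := hτ0.symm
            _ ≤ τ k := hmono.monotone (Nat.zero_le _)
            _ ≤ r := hr.1
        have key := hode (k + 1) (by omega) r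
          ⟨⟨by rw [show k + 1 - 1 = k by omega]; exact hr.1, le_trans hr.2 hkspec⟩,
            hr0, hr.2⟩
        rw [show k + 1 - 1 = k by omega] at key
        exact key.mono (Set.Icc_subset_Icc_right hkspec)
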